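/- Let F be a proper subfield of a field K of characteristic 0. Let p(x) = Σ_{k=0}^n a_k x^k ∈ K[x] be nonconstant with a_n ≠ 0, and let q(x) = Σ_{j=0}^m b_j x^j ∈ K[x] with b_m ≠ 0 and b_m ∈ F. If b_j ∉ F for some j ≥ 1, then the composition p ∘ q has some coefficient not in F. -/

import Mathlib

open Polynomial

theorem stmt4 {K : Type*} [Field K] [CharZero K] (F : Subfield K) (hF : F ≠ ⊤)
    (p q : K[X]) (hp : 0 < p.natDegree) (hq : q ≠ 0)
    (hql : q.leadingCoeff ∈ F)
    (hj : ∃ j, 1 ≤ j ∧ q.coeff j ∉ F) :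
    ∃ k, (p.comp q).coeff k ∉ F := by
  classical
  by_contra hcon
  push_neg at hcon
  set m := q.natDegree with hm
  set n := p.natDegree with hn
  obtain ⟨j, hj1, hjF⟩ := hj
  have hjm : j ≤ m := by
    by_contra hjm
    push_neg at hjm
    exact hjF (by rw [Polynomial.coeff_eq_zero_of_natDegree_lt hjm]; exact F.zero_mem)
  set j0 := Nat.findGreatest (fun i => q.coeff i ∉ F) m with hj0def
  have hj0P : q.coeff j0 ∉ F := Nat.findGreatest_spec (P := fun i => q.coeff i ∉ F) hjm hjF
  have hj0ge : j ≤ j0 := Nat.le_findGreatest (P := fun i => q.coeff i ∉ F) hjm hjF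
  have hj0le : j0 ≤ m := Nat.findGreatest_le (P := fun i => q.coeff i ∉ F) m
  have hgt : ∀ i, j0 < i → q.coeff i ∈ F := by
    intro i hi
    by_cases him : i ≤ m
    · have := Nat.findGreatest_is_greatest (P := fun i => q.coeff i ∉ F) hi him
      simpa using this
    · push_neg at him
      rw [Polynomial.coeff_eq_zero_of_natDegree_lt him]
      exact F.zero_mem
  have hlc : q.coeff m = q.leadingCoeff := rfl
  have hj0m : j0 < m := by
    rcases lt_or_eq_of_le hj0le with h | h
    · exact h
    · exact absurd (h ▸ hlc ▸ hql) (h ▸ hj0P)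
  have hlc0 : q.leadingCoeff ≠ 0 := Polynomial.leadingCoeff_ne_zero.mpr hq
  set lc := q.leadingCoeff with hlcdef
  set bj := q.coeff j0 with hbjdef
  -- key induction
  have key : ∀ k, 1 ≤ k →
      ((q ^ k).coeff ((k - 1) * m + j0) - (k : K) * lc ^ (k - 1) * bj ∈ F ∧
        ∀ i, (k - 1) * m + j0 < i → (q ^ k).coeff i ∈ F) := by
    intro k hk
    induction k, hk using Nat.le_induction with
    | base =>
      constructor
      · simpa [hbjdef] using F.zero_mem
      · intro i hi
        simpa using hgt i (by simpa using hi)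
    | succ k hk IH =>
      obtain ⟨IH1, IH2⟩ := IH
      have hdegk : (q ^ k).natDegree = k * m := by
        rw [Polynomial.natDegree_pow]
      have hcoeffkm : (q ^ k).coeff (k * m) = lc ^ k := by
        rw [← hdegk]
        exact (Polynomial.leadingCoeff_pow q k) ▸ rfl
      have hsucc : (k + 1 - 1) = k := by omega
      have hksub : (k - 1) * m + m = k * m := by
        have : k - 1 + 1 = k := by omega
        calc (k - 1) * m + m = (k - 1 + 1) * m := by ring
          _ = k * m := by rw [this]
      have part2 : ∀ i, k * m + j0 < i → (q ^ (k + 1)).coeff i ∈ F := by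
        intro i hi
        rw [pow_succ, Polynomial.coeff_mul]
        apply Subfield.sum_mem
        rintro ⟨a, b⟩ hab
        rw [Finset.HasAntidiagonal.mem_antidiagonal] at hab
        by_cases hb : j0 < b
        · by_cases hbm : b ≤ m
          · have ha : (k - 1) * m + j0 < a := by omega
            exact F.mul_mem (IH2 a ha) (hgt b hb)
          · push_neg at hbm
            rw [Polynomial.coeff_eq_zero_of_natDegree_lt hbm, mul_zero]
            exact F.zero_mem
        · push_neg at hb
          have ha : k * m < a := by omega
          rw [Polynomial.coeff_eq_zero_of_natDegree_lt (hdegk ▸ ha), zero_mul]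
          exact F.zero_mem
      refine ⟨?_, by simpa [hsucc] using part2⟩
      -- part 1
      rw [hsucc, pow_succ, Polynomial.coeff_mul]
      set s := Finset.HasAntidiagonal.antidiagonal (k * m + j0) with hs
      set p1 : ℕ × ℕ := ((k - 1) * m + j0, m) with hp1
      set p2 : ℕ × ℕ := (k * m, j0) with hp2
      have hp1s : p1 ∈ s := by
        rw [hs, Finset.HasAntidiagonal.mem_antidiagonal, hp1]
        simp only
        omega
      have hp2s : p2 ∈ s := by
        rw [hs, Finset.HasAntidiagonal.mem_antidiagonal]
      have hp12 : p2 ≠ p1 := by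
        simp only [hp1, hp2, Prod.mk.injEq, ne_eq]
        omega
      set f : ℕ × ℕ → K := fun x => (q ^ k).coeff x.1 * q.coeff x.2 with hf
      have hsum : ∑ x ∈ s, f x = f p1 + (f p2 + ∑ x ∈ (s.erase p1).erase p2, f x) := by
        rw [Finset.add_sum_erase _ f (Finset.mem_erase.mpr ⟨hp12, hp2s⟩),
          Finset.add_sum_erase _ f hp1s]
      have hrest : ∑ x ∈ (s.erase p1).erase p2, f x ∈ F := by
        apply Subfield.sum_mem
        rintro ⟨a, b⟩ hab
        have hne2 : (a, b) ≠ p2 := (Finset.mem_erase.mp hab).1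
        have hab' := Finset.mem_erase.mp (Finset.mem_erase.mp hab).2
        have hne1 : (a, b) ≠ p1 := hab'.1
        have habN : a + b = k * m + j0 := Finset.HasAntidiagonal.mem_antidiagonal.mp hab'.2
        simp only [hf]
        by_cases hb : j0 < b
        · by_cases hbm : b < m
          · have ha : (k - 1) * m + j0 < a := by omega
            exact F.mul_mem (IH2 a ha) (hgt b hb)
          · push_neg at hbm
            rcases lt_or_eq_of_le hbm with h | h
            · rw [Polynomial.coeff_eq_zero_of_natDegree_lt h, mul_zero]
              exact F.zero_mem
            · exfalso
              apply hne1
              simp only [hp1, Prod.mk.injEq]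
              omega
        · push_neg at hb
          rcases lt_or_eq_of_le hb with h | h
          · have ha : k * m < a := by omega
            rw [Polynomial.coeff_eq_zero_of_natDegree_lt (hdegk ▸ ha), zero_mul]
            exact F.zero_mem
          · exfalso
            apply hne2
            simp only [hp2, Prod.mk.injEq]
            omega
      rw [hsum]
      have hfp1 : f p1 = (q ^ k).coeff ((k - 1) * m + j0) * lc := rfl
      have hfp2 : f p2 = lc ^ k * bj := by
        simp only [hf, hp2, hcoeffkm, hbjdef]
      have hpowlc : lc ^ (k - 1) * lc = lc ^ k := by
        rw [← pow_succ]
        congr 1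
        omega
      have hrew : f p1 + (f p2 + ∑ x ∈ (s.erase p1).erase p2, f x) -
          ((k + 1 : ℕ) : K) * lc ^ k * bj =
          ((q ^ k).coeff ((k - 1) * m + j0) - (k : K) * lc ^ (k - 1) * bj) * lc +
            ∑ x ∈ (s.erase p1).erase p2, f x := by
        rw [hfp1, hfp2]
        push_cast
        rw [sub_mul, mul_assoc ((k : K) * lc ^ (k - 1)), mul_comm bj lc, ← mul_assoc,
          mul_assoc (k : K), hpowlc]
        ring
      rw [hrew]
      exact F.add_mem (F.mul_mem IH1 hql) hrest
  -- final step
  have hn1 : 1 ≤ n := hp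
  set D := (n - 1) * m + j0 with hD
  have hrepr : p.comp q = ∑ i ∈ Finset.range (n + 1), C (p.coeff i) * q ^ i := by
    conv_lhs => rw [p.as_sum_range]
    rw [Polynomial.comp, Polynomial.eval₂_finset_sum]
    refine Finset.sum_congr rfl fun i _ => ?_
    rw [Polynomial.eval₂_monomial]
  have hcompD : (p.comp q).coeff D = p.coeff n * (q ^ n).coeff D := by
    rw [hrepr, Polynomial.finset_sum_coeff, Finset.sum_range_succ]
    have hzero : ∀ i ∈ Finset.range n, (C (p.coeff i) * q ^ i).coeff D = 0 := by
      intro i hi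
      rw [Finset.mem_range] at hi
      rw [Polynomial.coeff_C_mul]
      have hdeg : (q ^ i).natDegree < D := by
        rw [Polynomial.natDegree_pow]
        have h1 : i * q.natDegree ≤ (n - 1) * q.natDegree :=
          Nat.mul_le_mul_right _ (by omega)
        have h2 : (n - 1) * q.natDegree = (n - 1) * m := by rw [hm]
        omega
      rw [Polynomial.coeff_eq_zero_of_natDegree_lt hdeg, mul_zero]
    rw [Finset.sum_eq_zero hzero, zero_add, Polynomial.coeff_C_mul]
  have hmne : m ≠ 0 := by omega
  have hlcF : lc ^ n ∈ F := F.pow_mem hql n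
  have hlcn0 : lc ^ n ≠ 0 := pow_ne_zero n hlc0
  have hanF : p.leadingCoeff ∈ F := by
    have h1 : (p.comp q).leadingCoeff = p.leadingCoeff * lc ^ n :=
      Polynomial.leadingCoeff_comp hmne
    have h2 : (p.comp q).leadingCoeff ∈ F := hcon _
    rw [h1] at h2
    have : p.leadingCoeff = p.leadingCoeff * lc ^ n * (lc ^ n)⁻¹ := by
      field_simp
    rw [this]
    exact F.mul_mem h2 (F.inv_mem hlcF)
  have han0 : p.leadingCoeff ≠ 0 := by
    rw [Polynomial.leadingCoeff_ne_zero]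
    intro h
    rw [hn, h, Polynomial.natDegree_zero] at hp
    exact lt_irrefl 0 hp
  have hqnD : (q ^ n).coeff D ∈ F := by
    have h1 := hcon D
    rw [hcompD] at h1
    have hpn : p.coeff n = p.leadingCoeff := by rw [hn]; rfl
    rw [hpn] at h1
    have : (q ^ n).coeff D = (p.leadingCoeff)⁻¹ * (p.leadingCoeff * (q ^ n).coeff D) := by
      rw [← mul_assoc, inv_mul_cancel₀ han0, one_mul]
    rw [this]
    exact F.mul_mem (F.inv_mem hanF) h1
  obtain ⟨key1, _⟩ := key n hn1
  have hnbj : (n : K) * lc ^ (n - 1) * bj ∈ F := by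
    have : (n : K) * lc ^ (n - 1) * bj =
        (q ^ n).coeff D - ((q ^ n).coeff D - (n : K) * lc ^ (n - 1) * bj) := by ring
    rw [this]
    exact F.sub_mem hqnD key1
  have hu0 : (n : K) * lc ^ (n - 1) ≠ 0 := by
    apply mul_ne_zero
    · exact Nat.cast_ne_zero.mpr (by omega : n ≠ 0)
    · exact pow_ne_zero _ hlc0
  have huF : (n : K) * lc ^ (n - 1) ∈ F := F.mul_mem (natCast_mem F n) (F.pow_mem hql _)
  have : bj ∈ F := by
    have : bj = ((n : K) * lc ^ (n - 1))⁻¹ * ((n : K) * lc ^ (n - 1) * bj) := by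
      rw [← mul_assoc, inv_mul_cancel₀ hu0, one_mul]
    rw [this]
    exact F.mul_mem (F.inv_mem huF) hnbj
  exact hj0P this
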